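/- For every prime p and integers a_1,...,a_k satisfying p | (a_1 + ... + a_k) and p ∤ ∑_{i∈I} a_i for all nonempty proper subsets I ⊆ {1,...,k}, the number of solutions of a_1x_1 + ... + a_kx_k ≡ 0 (mod p) in (Z/pZ)^k with all x_i distinct does not depend on the choice of a_1,...,a_k. -/

import Mathlib

open Finset
open scoped Classical

namespace Sch16
variable {p k : ℕ}


noncomputable def rho (x : Fin k → ZMod p) : Fin k → Fin k := by
  classical exact fun i => (univ.filter fun j => x j = x i).min' ⟨i, by simp⟩

lemma rho_le (x : Fin k → ZMod p) (i : Fin k) : rho x i ≤ i := by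
  classical exact min'_le _ _ (by simp)

lemma x_rho (x : Fin k → ZMod p) (i : Fin k) : x (rho x i) = x i := by
  classical
  have h := (univ.filter fun j => x j = x i).min'_mem ⟨i, by simp⟩
  unfold rho
  exact (mem_filter.mp h).2

lemma rho_class_eq (x : Fin k → ZMod p) {i j : Fin k} (h : x j = x i) :
    rho x j = rho x i := by
  classical
  unfold rho
  have hs : (univ.filter fun j' => x j' = x j) = (univ.filter fun j' => x j' = x i) := by
    apply filter_congr; intro j' _; simp only [h]
  simp only [hs]

lemma rho_idem (x : Fin k → ZMod p) (i : Fin k) : rho x (rho x i) = rho x i :=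
  rho_class_eq x (x_rho x i)

/-- classification of the fibers of `rho`. -/
lemma rho_eq_iff (x : Fin k → ZMod p) (r : Fin k → Fin k)
    (hr : ∀ i, r i ≤ i) (hrr : ∀ i, r (r i) = r i) :
    rho x = r ↔ (x ∘ r = x ∧ Set.InjOn x {i | r i = i}) := by
  classical
  constructor
  · rintro rfl
    refine ⟨funext fun i => x_rho x i, ?_⟩
    intro i hi j hj hxy
    simp only [Set.mem_setOf_eq] at hi hj
    have := rho_class_eq x (i := j) (j := i) hxy
    rw [hi, hj] at this
    exact this
  · rintro ⟨hcomp, hinj⟩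
    funext i
    have hclass : ∀ j, x j = x i ↔ r j = r i := by
      intro j
      constructor
      · intro h
        have h1 : x (r j) = x (r i) := by
          rw [show x (r j) = x j from congrFun hcomp j,
              show x (r i) = x i from congrFun hcomp i, h]
        exact hinj (by simpa using hrr j) (by simpa using hrr i) h1
      · intro h
        calc x j = x (r j) := (congrFun hcomp j).symm
          _ = x (r i) := by rw [h]
          _ = x i := congrFun hcomp i
    unfold rho
    apply le_antisymm
    · exact min'_le _ _ (by simp [hclass (r i), hrr i])
    · apply le_min'
      intro j hj
      rw [mem_filter] at hj
      calc r i = r j := ((hclass j).mp hj.2).symm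
        _ ≤ j := hr j

def mfix (r : Fin k → Fin k) : ℕ := Fintype.card {i : Fin k // r i = i}

noncomputable def eFix (r : Fin k → Fin k) : {i : Fin k // r i = i} ≃ Fin (mfix r) :=
  Fintype.equivFin _

noncomputable def toQuot (r : Fin k → Fin k) (hrr : ∀ i, r (r i) = r i) :
    Fin k → Fin (mfix r) := fun i => eFix r ⟨r i, hrr i⟩

noncomputable def quotCoef (r : Fin k → Fin k) (hrr : ∀ i, r (r i) = r i)
    (b : Fin k → ℤ) : Fin (mfix r) → ℤ := by
  classical exact fun t => ∑ i ∈ univ.filter fun i => toQuot r hrr i = t, b i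

lemma toQuot_section (r : Fin k → Fin k) (hrr : ∀ i, r (r i) = r i)
    (t : Fin (mfix r)) : toQuot r hrr (((eFix r).symm t : {i : Fin k // r i = i}) : Fin k) = t := by
  unfold toQuot
  have h : (⟨r (((eFix r).symm t : {i : Fin k // r i = i}) : Fin k), hrr _⟩ :
      {i : Fin k // r i = i}) = (eFix r).symm t :=
    Subtype.ext ((eFix r).symm t).2
  rw [h, Equiv.apply_symm_apply]

lemma toQuot_r (r : Fin k → Fin k) (hrr : ∀ i, r (r i) = r i) (i : Fin k) :
    toQuot r hrr (r i) = toQuot r hrr i := by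
  unfold toQuot
  congr 1
  exact Subtype.ext (hrr i)

lemma quot_sum_subset (r : Fin k → Fin k) (hrr : ∀ i, r (r i) = r i)
    (b : Fin k → ℤ) (I : Finset (Fin (mfix r))) :
    ∑ t ∈ I, quotCoef r hrr b t
      = ∑ i ∈ univ.filter fun i => toQuot r hrr i ∈ I, b i := by
  classical
  rw [← Finset.sum_fiberwise_of_maps_to (g := toQuot r hrr)
      (fun i hi => (mem_filter.mp hi).2) b]
  apply sum_congr rfl
  intro t ht
  unfold quotCoef
  congr 1
  ext i
  simp only [mem_filter, mem_univ, true_and]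
  exact ⟨fun h => ⟨by rw [h]; exact ht, h⟩, fun h => h.2⟩

lemma quot_sum_univ (r : Fin k → Fin k) (hrr : ∀ i, r (r i) = r i) (b : Fin k → ℤ) :
    ∑ t, quotCoef r hrr b t = ∑ i, b i := by
  classical
  rw [quot_sum_subset]
  congr 1
  simp

lemma mfix_lt (r : Fin k → Fin k) (i : Fin k) (hi : r i ≠ i) : mfix r < k := by
  classical
  have := Fintype.card_subtype_lt (p := fun i => r i = i) (x := i) hi
  simpa [mfix] using this

end Sch16

namespace Sch16
variable {p k : ℕ}

lemma quot_eqn [NeZero p] (r : Fin k → Fin k) (hrr : ∀ i, r (r i) = r i)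
    (b : Fin k → ℤ) (x : Fin k → ZMod p) (hx : x ∘ r = x) :
    ∑ t, (quotCoef r hrr b t : ZMod p) * x (((eFix r).symm t : {i : Fin k // r i = i}) : Fin k)
      = ∑ i, (b i : ZMod p) * x i := by
  classical
  rw [← Finset.sum_fiberwise univ (toQuot r hrr) (fun i => (b i : ZMod p) * x i)]
  apply sum_congr rfl
  intro t _
  unfold quotCoef
  push_cast
  rw [sum_mul]
  apply sum_congr rfl
  intro i hi
  have hit : toQuot r hrr i = t := (mem_filter.mp hi).2
  have h2 : (((eFix r).symm t : {i : Fin k // r i = i}) : Fin k) = r i := by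
    rw [← hit]
    unfold toQuot
    rw [Equiv.symm_apply_apply]
  rw [h2, show x (r i) = x i from congrFun hx i]

lemma quot_card [NeZero p] (b : Fin k → ℤ) (r : Fin k → Fin k)
    (hrr : ∀ i, r (r i) = r i) :
    (univ.filter fun x : Fin k → ZMod p =>
        (∑ i, (b i : ZMod p) * x i = 0) ∧ x ∘ r = x ∧ Set.InjOn x {i | r i = i}).card =
    (univ.filter fun y : Fin (mfix r) → ZMod p =>
        (∑ t, (quotCoef r hrr b t : ZMod p) * y t = 0) ∧ Function.Injective y).card := by
  classical
  apply card_nbij' (i := fun (x : Fin k → ZMod p) => fun t => x (((eFix r).symm t : {i : Fin k // r i = i}) : Fin k))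
    (j := fun (y : Fin (mfix r) → ZMod p) => fun i => y (toQuot r hrr i))
  · -- forward membership
    intro x hx
    rw [mem_coe, mem_filter] at hx ⊢
    obtain ⟨-, heq, hcomp, hinj⟩ := hx
    refine ⟨mem_univ _, ?_, ?_⟩
    · rw [quot_eqn r hrr b x hcomp]; exact heq
    · intro t1 t2 h12
      have h1 := ((eFix r).symm t1).2
      have h2 := ((eFix r).symm t2).2
      have := hinj (Set.mem_setOf_eq ▸ h1) (Set.mem_setOf_eq ▸ h2) h12
      have h3 : (eFix r).symm t1 = (eFix r).symm t2 := Subtype.ext this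
      exact (eFix r).symm.injective h3
  · -- backward membership
    intro y hy
    rw [mem_coe, mem_filter] at hy ⊢
    obtain ⟨-, heq, hinj⟩ := hy
    have hcomp : (fun i => y (toQuot r hrr i)) ∘ r = fun i => y (toQuot r hrr i) := by
      funext i
      simp only [Function.comp_apply]
      rw [toQuot_r]
    refine ⟨mem_univ _, ?_, hcomp, ?_⟩
    · rw [← quot_eqn r hrr b _ hcomp]
      have hy2 : ∀ t, y (toQuot r hrr (((eFix r).symm t : {i : Fin k // r i = i}) : Fin k))
          = y t := fun t => by rw [toQuot_section]
      simpa only [hy2] using heq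
    · intro i hi j hj hij
      simp only [Set.mem_setOf_eq] at hi hj
      simp only at hij
      have := hinj hij
      unfold toQuot at this
      have h2 : (⟨r i, hrr i⟩ : {i : Fin k // r i = i}) = ⟨r j, hrr j⟩ :=
        (eFix r).injective this
      have h3 : r i = r j := congrArg Subtype.val h2
      rw [hi, hj] at h3
      exact h3
  · -- left inverse
    intro x hx
    rw [mem_coe, mem_filter] at hx
    obtain ⟨-, -, hcomp, -⟩ := hx
    funext i
    simp only
    have h2 : (((eFix r).symm (toQuot r hrr i) : {i : Fin k // r i = i}) : Fin k) = r i := by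
      unfold toQuot
      rw [Equiv.symm_apply_apply]
    rw [h2]
    exact congrFun hcomp i
  · -- right inverse
    intro y _
    funext t
    simp only
    rw [toQuot_section]

lemma decomp [NeZero p] (c : Fin k → ZMod p) :
    (univ.filter fun x : Fin k → ZMod p => ∑ i, c i * x i = 0).card =
    ∑ r ∈ univ.filter (fun r : Fin k → Fin k => (∀ i, r i ≤ i) ∧ ∀ i, r (r i) = r i),
      (univ.filter fun x : Fin k → ZMod p =>
        (∑ i, c i * x i = 0) ∧ x ∘ r = x ∧ Set.InjOn x {i | r i = i}).card := by
  classical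
  rw [card_eq_sum_card_fiberwise (f := rho)
      (t := univ.filter (fun r : Fin k → Fin k => (∀ i, r i ≤ i) ∧ ∀ i, r (r i) = r i))
      (fun x _ => by simp [rho_le, rho_idem])]
  apply sum_congr rfl
  intro r hr
  rw [mem_filter] at hr
  congr 1
  rw [filter_filter]
  apply filter_congr
  intro x _
  rw [and_congr_right_iff]
  intro _
  exact rho_eq_iff x r hr.2.1 hr.2.2

end Sch16

namespace Sch16
variable {p k : ℕ}

lemma fiber_card_eq [NeZero p] (hp : p.Prime) (c : Fin k → ZMod p) (j : Fin k)
    (hj : c j ≠ 0) (v : ZMod p) :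
    (univ.filter fun x : Fin k → ZMod p => ∑ i, c i * x i = v).card
      = (univ.filter fun x : Fin k → ZMod p => ∑ i, c i * x i = 0).card := by
  haveI : Fact p.Prime := ⟨hp⟩
  have hw : ∀ x : Fin k → ZMod p,
      ∑ i, c i * (x i + if i = j then (c j)⁻¹ * v else 0)
        = (∑ i, c i * x i) + v := by
    intro x
    simp only [mul_add]
    rw [sum_add_distrib]
    congr 1
    have h1 : ∀ i ∈ univ, c i * (if i = j then (c j)⁻¹ * v else 0)
        = if i = j then c i * ((c j)⁻¹ * v) else 0 := fun i _ => by
      rw [mul_ite, mul_zero]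
    rw [Finset.sum_congr rfl h1, Finset.sum_ite_eq' univ j (fun i => c i * ((c j)⁻¹ * v))]
    simp [← mul_assoc, mul_inv_cancel₀ hj]
  apply card_nbij' (i := fun x : Fin k → ZMod p => fun i => x i - if i = j then (c j)⁻¹ * v else 0)
    (j := fun x : Fin k → ZMod p => fun i => x i + if i = j then (c j)⁻¹ * v else 0)
  · intro x hx
    rw [mem_coe, mem_filter] at hx ⊢
    refine ⟨mem_univ _, ?_⟩
    have h2 := hw (fun i => x i - if i = j then (c j)⁻¹ * v else 0)
    simp only [sub_add_cancel] at h2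
    rw [hx.2] at h2
    have h3 : (∑ i, c i * (x i - if i = j then (c j)⁻¹ * v else 0)) + v = 0 + v := by
      rw [zero_add]; exact h2.symm
    simpa using add_right_cancel h3
  · intro x hx
    rw [mem_coe, mem_filter] at hx ⊢
    refine ⟨mem_univ _, ?_⟩
    rw [hw x, hx.2, zero_add]
  · intro x _
    funext i
    simp
  · intro x _
    funext i
    simp

end Sch16

namespace Sch16
variable {p k : ℕ}

lemma allcard_unit [NeZero p] (hp : p.Prime) (c : Fin k → ZMod p) (j : Fin k)
    (hj : c j ≠ 0) :
    (univ.filter fun x : Fin k → ZMod p => ∑ i, c i * x i = 0).card = p ^ (k - 1) := by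
  have htot : p ^ k = ∑ v : ZMod p,
      (univ.filter fun x : Fin k → ZMod p => ∑ i, c i * x i = v).card := by
    rw [← card_eq_sum_card_fiberwise (f := fun x : Fin k → ZMod p => ∑ i, c i * x i)
        (t := univ) (fun _ _ => mem_univ _)]
    rw [card_univ, Fintype.card_fun, ZMod.card, Fintype.card_fin]
  rw [Finset.sum_congr rfl (fun v _ => fiber_card_eq hp c j hj v)] at htot
  rw [sum_const, card_univ, ZMod.card, smul_eq_mul] at htot
  have hk : k - 1 + 1 = k := Nat.succ_pred_eq_of_pos j.pos
  have hpk : p ^ k = p * p ^ (k - 1) := by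
    calc p ^ k = p ^ (k - 1 + 1) := by rw [hk]
      _ = p * p ^ (k - 1) := by rw [pow_succ, mul_comm]
  rw [hpk] at htot
  exact (Nat.eq_of_mul_eq_mul_left hp.pos htot).symm

lemma allcard_zero [NeZero p] (c : Fin k → ZMod p) (h : ∀ i, c i = 0) :
    (univ.filter fun x : Fin k → ZMod p => ∑ i, c i * x i = 0).card = p ^ k := by
  have : (univ.filter fun x : Fin k → ZMod p => ∑ i, c i * x i = 0) = univ := by
    apply eq_univ_iff_forall.mpr
    intro x
    simp [h]
  rw [this, card_univ, Fintype.card_fun, ZMod.card, Fintype.card_fin]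

lemma allcard_hyps [NeZero p] (hp : p.Prime) (b : Fin k → ℤ)
    (hbsum : (p : ℤ) ∣ ∑ i, b i)
    (hbI : ∀ I : Finset (Fin k), I.Nonempty → I ≠ univ → ¬ (p : ℤ) ∣ ∑ i ∈ I, b i) :
    (univ.filter fun x : Fin k → ZMod p => ∑ i, (b i : ZMod p) * x i = 0).card
      = if k ≤ 1 then p ^ k else p ^ (k - 1) := by
  by_cases hk : k ≤ 1
  · rw [if_pos hk]
    apply allcard_zero
    intro i
    haveI : Subsingleton (Fin k) := Fintype.card_le_one_iff_subsingleton.mp (by simpa using hk)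
    have hsum_eq : ∑ i', b i' = b i :=
      Finset.sum_eq_single_of_mem i (mem_univ i)
        (fun j _ hji => absurd (Subsingleton.elim j i) hji)
    rw [ZMod.intCast_zmod_eq_zero_iff_dvd]
    rw [← hsum_eq]
    exact hbsum
  · rw [if_neg hk]
    push_neg at hk
    have h2 : 2 ≤ k := hk
    have hj0 : (0 : ℕ) < k := by omega
    have hj1 : (1 : ℕ) < k := by omega
    have hne : ({⟨0, hj0⟩} : Finset (Fin k)) ≠ univ := by
      intro h
      have : (⟨1, hj1⟩ : Fin k) ∈ ({⟨0, hj0⟩} : Finset (Fin k)) := h ▸ mem_univ _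
      rw [mem_singleton] at this
      exact absurd (congrArg Fin.val this) (by simp)
    have := hbI {⟨0, hj0⟩} (singleton_nonempty _) hne
    rw [sum_singleton] at this
    apply allcard_unit hp _ (⟨0, hj0⟩ : Fin k)
    rw [Ne, ZMod.intCast_zmod_eq_zero_iff_dvd]
    exact this

lemma quot_hyps_sum (r : Fin k → Fin k) (hrr : ∀ i, r (r i) = r i) (b : Fin k → ℤ)
    (hbsum : (p : ℤ) ∣ ∑ i, b i) : (p : ℤ) ∣ ∑ t, quotCoef r hrr b t := by
  rw [quot_sum_univ]; exact hbsum

lemma quot_hyps_I (r : Fin k → Fin k) (hrr : ∀ i, r (r i) = r i) (b : Fin k → ℤ)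
    (hbI : ∀ I : Finset (Fin k), I.Nonempty → I ≠ univ → ¬ (p : ℤ) ∣ ∑ i ∈ I, b i) :
    ∀ I : Finset (Fin (mfix r)), I.Nonempty → I ≠ univ →
      ¬ (p : ℤ) ∣ ∑ t ∈ I, quotCoef r hrr b t := by
  intro I hIne hIu
  rw [quot_sum_subset]
  apply hbI
  · obtain ⟨t, ht⟩ := hIne
    refine ⟨(((eFix r).symm t : {i : Fin k // r i = i}) : Fin k), ?_⟩
    rw [mem_filter]
    exact ⟨mem_univ _, by rw [toQuot_section]; exact ht⟩
  · obtain ⟨t, ht⟩ := (not_forall.mp (fun h => hIu (eq_univ_iff_forall.mpr h)))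
    intro hJu
    apply ht
    have hmem : (((eFix r).symm t : {i : Fin k // r i = i}) : Fin k)
        ∈ univ.filter fun i => toQuot r hrr i ∈ I := by
      rw [hJu]; exact mem_univ _
    rw [mem_filter, toQuot_section] at hmem
    exact hmem.2

end Sch16

namespace Sch16

theorem key (p : ℕ) (hp : p.Prime) : ∀ k : ℕ, ∀ a a' : Fin k → ℤ,
    (p : ℤ) ∣ ∑ i, a i → (p : ℤ) ∣ ∑ i, a' i →
    (∀ I : Finset (Fin k), I.Nonempty → I ≠ univ → ¬ (p : ℤ) ∣ ∑ i ∈ I, a i) →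
    (∀ I : Finset (Fin k), I.Nonempty → I ≠ univ → ¬ (p : ℤ) ∣ ∑ i ∈ I, a' i) →
    Nat.card {x : Fin k → ZMod p //
        ∑ i, (a i : ZMod p) * x i = 0 ∧ Function.Injective x} =
      Nat.card {x : Fin k → ZMod p //
        ∑ i, (a' i : ZMod p) * x i = 0 ∧ Function.Injective x} := by
  haveI : NeZero p := ⟨hp.pos.ne'⟩
  have hconv : ∀ (m : ℕ) (b : Fin m → ℤ),
      Nat.card {x : Fin m → ZMod p //
          ∑ i, (b i : ZMod p) * x i = 0 ∧ Function.Injective x}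
        = (univ.filter fun x : Fin m → ZMod p =>
            (∑ i, (b i : ZMod p) * x i = 0) ∧ Function.Injective x).card := by
    intro m b
    rw [Nat.card_eq_fintype_card, Fintype.card_subtype]
  intro k
  induction k using Nat.strong_induction_on with
  | _ k IH =>
    intro a a' hsum hsum' hI hI'
    have hid : id ∈ univ.filter (fun r : Fin k → Fin k =>
        (∀ i, r i ≤ i) ∧ ∀ i, r (r i) = r i) := by
      rw [mem_filter]
      exact ⟨mem_univ _, fun i => le_refl i, fun i => rfl⟩
    have main : ∀ b : Fin k → ℤ, ((p : ℤ) ∣ ∑ i, b i) →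
        (∀ I : Finset (Fin k), I.Nonempty → I ≠ univ → ¬ (p : ℤ) ∣ ∑ i ∈ I, b i) →
        (if k ≤ 1 then p ^ k else p ^ (k - 1)) =
          (univ.filter fun x : Fin k → ZMod p =>
              (∑ i, (b i : ZMod p) * x i = 0) ∧ Function.Injective x).card
          + ∑ r ∈ (univ.filter (fun r : Fin k → Fin k =>
                (∀ i, r i ≤ i) ∧ ∀ i, r (r i) = r i)).erase id,
              (univ.filter fun x : Fin k → ZMod p =>
                (∑ i, (b i : ZMod p) * x i = 0) ∧ x ∘ r = x ∧
                  Set.InjOn x {i | r i = i}).card := by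
      intro b hbsum hbI
      rw [← allcard_hyps hp b hbsum hbI, decomp]
      rw [← Finset.add_sum_erase _ _ hid]
      congr 2
      apply filter_congr
      intro x _
      rw [and_congr_right_iff]
      intro _
      have hs : {i : Fin k | id i = i} = Set.univ := by ext i; simp
      rw [hs]
      constructor
      · rintro ⟨-, h⟩
        exact Set.injOn_univ.mp h
      · intro h
        exact ⟨rfl, Set.injOn_univ.mpr h⟩
    have key_r : ∀ r ∈ (univ.filter (fun r : Fin k → Fin k =>
          (∀ i, r i ≤ i) ∧ ∀ i, r (r i) = r i)).erase id,
        (univ.filter fun x : Fin k → ZMod p =>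
            (∑ i, (a i : ZMod p) * x i = 0) ∧ x ∘ r = x ∧
              Set.InjOn x {i | r i = i}).card =
        (univ.filter fun x : Fin k → ZMod p =>
            (∑ i, (a' i : ZMod p) * x i = 0) ∧ x ∘ r = x ∧
              Set.InjOn x {i | r i = i}).card := by
      intro r hr
      have hne : r ≠ id := ne_of_mem_erase hr
      have hrmem := mem_of_mem_erase hr
      rw [mem_filter] at hrmem
      obtain ⟨-, hrle, hrr⟩ := hrmem
      obtain ⟨i, hi⟩ : ∃ i, r i ≠ i := by
        by_contra hc
        push_neg at hc
        exact hne (funext hc)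
      have hlt : mfix r < k := mfix_lt r i hi
      rw [quot_card (b := a) r hrr, quot_card (b := a') r hrr]
      rw [← hconv, ← hconv]
      exact IH (mfix r) hlt (quotCoef r hrr a) (quotCoef r hrr a')
        (quot_hyps_sum r hrr a hsum) (quot_hyps_sum r hrr a' hsum')
        (quot_hyps_I r hrr a hI) (quot_hyps_I r hrr a' hI')
    have h1 := main a hsum hI
    have h2 := main a' hsum' hI'
    have hsums := Finset.sum_congr rfl (fun r hr => (key_r r hr).symm)
    rw [hsums] at h2
    rw [hconv, hconv]
    exact Nat.add_right_cancel (h1.symm.trans h2)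

end Sch16

theorem stmt_16 (p : ℕ) (hp : p.Prime) (k : ℕ) (a a' : Fin k → ℤ)
    (hsum : (p : ℤ) ∣ ∑ i, a i) (hsum' : (p : ℤ) ∣ ∑ i, a' i)
    (hI : ∀ I : Finset (Fin k), I.Nonempty → I ≠ Finset.univ → ¬ (p : ℤ) ∣ ∑ i ∈ I, a i)
    (hI' : ∀ I : Finset (Fin k), I.Nonempty → I ≠ Finset.univ → ¬ (p : ℤ) ∣ ∑ i ∈ I, a' i) :
    Nat.card {x : Fin k → ZMod p //
        ∑ i, (a i : ZMod p) * x i = 0 ∧ Function.Injective x} =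
      Nat.card {x : Fin k → ZMod p //
        ∑ i, (a' i : ZMod p) * x i = 0 ∧ Function.Injective x} :=
  Sch16.key p hp k a a' hsum hsum' hI hI'
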